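/- Let a_0, a_1, a_2, ... be i.i.d. complex random variables with ℙ(a_0 = 0) = 0 and |a_0| not almost surely constant. Suppose the distribution of |a_0| is absolutely continuous with respect to Lebesgue measure on [0,∞) with density g, and that g is continuous at 0 with g(0) > 0. Then for every integer n ≥ 1, the largest root modulus x_n^(n) of P_n(z) = ∑_{k=0}^n a_k z^k satisfies 𝔼[x_n^(n)] = ∞. -/

import Mathlib

open MeasureTheory ProbabilityTheory Polynomial Filter
open scoped ENNReal

/-- The random Kac polynomial `P_n(z) = ∑_{k=0}^n a_k z^k`. -/
noncomputable def kacPoly {Ω : Type*} (a : ℕ → Ω → ℂ) (n : ℕ) (ω : Ω) : Polynomial ℂ :=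
  ∑ k ∈ Finset.range (n + 1), Polynomial.C (a k ω) * Polynomial.X ^ k

/-- The smallest modulus of a root of a complex polynomial. -/
noncomputable def minRootMod (p : Polynomial ℂ) : ℝ :=
  sInf ((fun z : ℂ => ‖z‖) '' {z : ℂ | z ∈ p.roots})

/-- The largest modulus of a root of a complex polynomial. -/
noncomputable def maxRootMod (p : Polynomial ℂ) : ℝ :=
  sSup ((fun z : ℂ => ‖z‖) '' {z : ℂ | z ∈ p.roots})

section Aux

lemma KacAux.maxRootMod_nonneg (p : Polynomial ℂ) (hp : p.roots ≠ 0) : 0 ≤ maxRootMod p := by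
  obtain ⟨z, hz⟩ := Multiset.exists_mem_of_ne_zero hp
  have hfin : ((fun z : ℂ => ‖z‖) '' {z : ℂ | z ∈ p.roots}).Finite := by
    apply Set.Finite.image
    have : {z : ℂ | z ∈ p.roots} = ↑p.roots.toFinset := by
      ext w; simp [Multiset.mem_toFinset]
    rw [this]; exact (p.roots.toFinset : Finset ℂ).finite_toSet
  have : ‖z‖ ∈ (fun z : ℂ => ‖z‖) '' {z : ℂ | z ∈ p.roots} := ⟨z, hz, rfl⟩
  exact le_trans (norm_nonneg z) (le_csSup hfin.bddAbove this)

lemma KacAux.abs_root_le (p : Polynomial ℂ) {z : ℂ} (hz : z ∈ p.roots) :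
    ‖z‖ ≤ maxRootMod p := by
  have hfin : ((fun z : ℂ => ‖z‖) '' {z : ℂ | z ∈ p.roots}).Finite := by
    apply Set.Finite.image
    have : {z : ℂ | z ∈ p.roots} = ↑p.roots.toFinset := by
      ext w; simp [Multiset.mem_toFinset]
    rw [this]; exact (p.roots.toFinset : Finset ℂ).finite_toSet
  exact le_csSup hfin.bddAbove ⟨z, hz, rfl⟩

lemma KacAux.roots_ne_zero {p : Polynomial ℂ} (hn : 1 ≤ p.natDegree) : p.roots ≠ 0 := by
  have hcard := Polynomial.splits_iff_card_roots.mp (IsAlgClosed.splits p)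
  intro h; rw [h] at hcard; simp at hcard; omega

lemma KacAux.poly_coeff_bound (p : Polynomial ℂ) (n : ℕ) (hn : 1 ≤ n) (hdeg : p.natDegree = n) :
    ‖p.coeff (n - 1)‖ ≤ (n : ℝ) * ‖p.coeff n‖ * maxRootMod p := by
  have hp0 : p ≠ 0 := by
    intro h; rw [h] at hdeg; simp at hdeg; omega
  have hlc : p.leadingCoeff ≠ 0 := leadingCoeff_ne_zero.mpr hp0
  set q := p * C p.leadingCoeff⁻¹ with hq_def
  have hq : q.Monic := monic_mul_leadingCoeff_inv hp0
  have hqroots : q.roots = p.roots := by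
    rw [hq_def, mul_comm, roots_C_mul _ (inv_ne_zero hlc)]
  have hqdeg : q.natDegree = n := by
    rw [hq_def, natDegree_mul_C (inv_ne_zero hlc), hdeg]
  have hsplit : q.Splits := IsAlgClosed.splits q
  have hsum := hsplit.nextCoeff_eq_neg_sum_roots_of_monic hq
  have hnext : q.nextCoeff = q.coeff (n - 1) := by
    rw [nextCoeff_of_natDegree_pos (by omega), hqdeg]
  have hcard : q.roots.card = n := by
    rw [splits_iff_card_roots.mp hsplit, hqdeg]
  set M := maxRootMod p with hM
  have hM0 : 0 ≤ M := KacAux.maxRootMod_nonneg p (by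
    intro h; rw [hqroots, h] at hcard; simp at hcard; omega)
  have hsum_le : ‖q.roots.sum‖ ≤ (n : ℝ) * M := by
    calc ‖q.roots.sum‖ ≤ (q.roots.map (fun z => ‖z‖)).sum := norm_multiset_sum_le _
    _ ≤ (q.roots.map (fun z => ‖z‖)).card • M := by
        apply Multiset.sum_le_card_nsmul
        intro x hx
        obtain ⟨z, hz, rfl⟩ := Multiset.mem_map.mp hx
        rw [hqroots] at hz
        simpa using KacAux.abs_root_le p hz
    _ = (n : ℝ) * M := by rw [Multiset.card_map, hcard]; simp [nsmul_eq_mul]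
  have hcoeff : q.coeff (n - 1) = p.coeff (n - 1) * p.leadingCoeff⁻¹ := by
    rw [hq_def, coeff_mul_C]
  have key : ‖p.coeff (n-1)‖ * ‖p.leadingCoeff‖⁻¹ ≤ (n : ℝ) * M := by
    calc ‖p.coeff (n-1)‖ * ‖p.leadingCoeff‖⁻¹ = ‖q.coeff (n-1)‖ := by
          rw [hcoeff, norm_mul, norm_inv]
    _ = ‖q.roots.sum‖ := by rw [← hnext, hsum, norm_neg]
    _ ≤ (n : ℝ) * M := hsum_le
  have hlcn : p.leadingCoeff = p.coeff n := by rw [leadingCoeff, hdeg]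
  have hlcpos : 0 < ‖p.leadingCoeff‖ := norm_pos_iff.mpr hlc
  calc ‖p.coeff (n-1)‖ = (‖p.coeff (n-1)‖ * ‖p.leadingCoeff‖⁻¹) * ‖p.leadingCoeff‖ :=
        (inv_mul_cancel_right₀ (ne_of_gt hlcpos) _).symm
  _ ≤ ((n : ℝ) * M) * ‖p.leadingCoeff‖ := by
        apply mul_le_mul_of_nonneg_right key hlcpos.le
  _ = (n : ℝ) * ‖p.coeff n‖ * M := by rw [hlcn]; ring

lemma KacAux.kacPoly_coeff {Ω : Type*} (a : ℕ → Ω → ℂ) (n : ℕ) (ω : Ω) {j : ℕ} (hj : j ≤ n) :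
    (kacPoly a n ω).coeff j = a j ω := by
  unfold kacPoly
  rw [Polynomial.finset_sum_coeff]
  simp only [Polynomial.coeff_C_mul, Polynomial.coeff_X_pow, mul_ite, mul_one, mul_zero]
  rw [Finset.sum_ite_eq (Finset.range (n+1)) j (fun k => a k ω),
    if_pos (Finset.mem_range.mpr (by omega))]

lemma KacAux.kacPoly_natDegree {Ω : Type*} (a : ℕ → Ω → ℂ) (n : ℕ) (ω : Ω) (h : a n ω ≠ 0) :
    (kacPoly a n ω).natDegree = n := by
  have hle : (kacPoly a n ω).natDegree ≤ n := by
    apply Polynomial.natDegree_sum_le_of_forall_le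
    intro k hk
    exact le_trans (Polynomial.natDegree_C_mul_X_pow_le _ _)
      (Nat.lt_succ_iff.mp (Finset.mem_range.mp hk))
  have hge : n ≤ (kacPoly a n ω).natDegree := by
    apply Polynomial.le_natDegree_of_ne_zero
    rw [KacAux.kacPoly_coeff a n ω le_rfl]
    exact h
  omega

lemma KacAux.inv_lintegral_eq_top {Ω : Type*} [MeasurableSpace Ω] (μ : Measure Ω)
    [IsProbabilityMeasure μ]
    (X : Ω → ℝ) (hX : Measurable X)
    (g : ℝ → ℝ) (hgmeas : Measurable g) (hgnonneg : ∀ t, 0 ≤ g t)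
    (hdens : ∀ t : ℝ, 0 ≤ t → (μ {ω | X ω ≤ t}).toReal = ∫ s in (0:ℝ)..t, g s)
    (hgcont : ContinuousAt g 0) (hgpos : 0 < g 0) :
    ∫⁻ ω, (ENNReal.ofReal (X ω))⁻¹ ∂μ = ⊤ := by
  obtain ⟨δ, hδpos, hδ⟩ := Metric.continuousAt_iff.mp hgcont (g 0 / 4) (by positivity)
  set δ' := δ / 2 with hδ'
  have hδ'pos : 0 < δ' := by positivity
  have hgb : ∀ t ∈ Set.Icc (0:ℝ) δ', |g t - g 0| ≤ g 0 / 4 := by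
    intro t ht
    have : dist t 0 < δ := by
      rw [Real.dist_eq, sub_zero, abs_of_nonneg ht.1]
      calc t ≤ δ' := ht.2
      _ < δ := by rw [hδ']; linarith
    exact (le_of_lt (hδ this))
  have hInt : IntegrableOn g (Set.Icc 0 δ') volume := by
    apply Measure.integrableOn_of_bounded (M := g 0 + g 0 / 4)
    · exact measure_Icc_lt_top.ne
    · exact hgmeas.aestronglyMeasurable
    · filter_upwards [ae_restrict_mem measurableSet_Icc] with t ht
      have h1 := hgb t ht
      rw [Real.norm_eq_abs, abs_of_nonneg (hgnonneg t)]
      have := abs_le.mp h1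
      linarith [this.2]
  have hII : ∀ t ∈ Set.Icc (0:ℝ) δ', IntervalIntegrable g volume 0 t := by
    intro t ht
    apply MeasureTheory.IntegrableOn.intervalIntegrable
    rw [Set.uIcc_of_le ht.1]
    exact hInt.mono_set (Set.Icc_subset_Icc le_rfl ht.2)
  have hlow : ∀ t ∈ Set.Icc (0:ℝ) δ', 3/4 * g 0 * t ≤ (μ {ω | X ω ≤ t}).toReal := by
    intro t ht
    rw [hdens t ht.1]
    have : (∫ _ in (0:ℝ)..t, (3/4 * g 0)) ≤ ∫ s in (0:ℝ)..t, g s := by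
      apply intervalIntegral.integral_mono_on ht.1 intervalIntegrable_const (hII t ht)
      intro s hs
      have h1 := hgb s ⟨hs.1, le_trans hs.2 ht.2⟩
      have := abs_le.mp h1
      linarith [this.1]
    rw [intervalIntegral.integral_const, smul_eq_mul, sub_zero] at this
    linarith
  have hup : ∀ t ∈ Set.Icc (0:ℝ) δ', (μ {ω | X ω ≤ t}).toReal ≤ 5/4 * g 0 * t := by
    intro t ht
    rw [hdens t ht.1]
    have : (∫ s in (0:ℝ)..t, g s) ≤ ∫ _ in (0:ℝ)..t, (5/4 * g 0) := by
      apply intervalIntegral.integral_mono_on ht.1 (hII t ht) intervalIntegrable_const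
      intro s hs
      have h1 := hgb s ⟨hs.1, le_trans hs.2 ht.2⟩
      have := abs_le.mp h1
      linarith [this.2]
    rw [intervalIntegral.integral_const, smul_eq_mul, sub_zero] at this
    linarith
  set t : ℕ → ℝ := fun k => δ' / 2 ^ k with ht_def
  have htpos : ∀ k, 0 < t k := fun k => by positivity
  have htmem : ∀ k, t k ∈ Set.Icc (0:ℝ) δ' := by
    intro k
    refine ⟨(htpos k).le, ?_⟩
    rw [ht_def]
    calc δ' / 2 ^ k ≤ δ' / 1 := by
          apply div_le_div_of_nonneg_left hδ'pos.le one_pos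
          exact one_le_pow₀ one_le_two
    _ = δ' := div_one δ'
  have htsucc : ∀ k, t (k + 1) = t k / 2 := by
    intro k; rw [ht_def]; simp only; rw [pow_succ]; ring
  have htanti : ∀ {i j : ℕ}, i ≤ j → t j ≤ t i := by
    intro i j hij
    apply div_le_div_of_nonneg_left hδ'pos.le (by positivity)
    exact pow_le_pow_right₀ one_le_two hij
  set A : ℕ → Set Ω := fun k => {ω | X ω ∈ Set.Ioc (t (k + 1)) (t k)} with hA_def
  have hAmeas : ∀ k, MeasurableSet (A k) := fun k => hX measurableSet_Ioc
  have hμA : ∀ k, ENNReal.ofReal (g 0 / 8 * t k) ≤ μ (A k) := by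
    intro k
    have hsplit : {ω | X ω ≤ t k} = {ω | X ω ≤ t (k+1)} ∪ A k := by
      ext ω
      simp only [Set.mem_setOf_eq, Set.mem_union, hA_def, Set.mem_Ioc]
      constructor
      · intro h
        rcases le_or_gt (X ω) (t (k+1)) with h'|h'
        · exact Or.inl h'
        · exact Or.inr ⟨h', h⟩
      · rintro (h|h)
        · exact le_trans h (htanti (Nat.le_succ k))
        · exact h.2
    have hdisj : Disjoint {ω | X ω ≤ t (k+1)} (A k) := by
      rw [Set.disjoint_left]
      intro ω h1 h2
      exact absurd h1 (not_le.mpr h2.1)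
    have hmeq : μ {ω | X ω ≤ t k} = μ {ω | X ω ≤ t (k+1)} + μ (A k) := by
      rw [hsplit, measure_union hdisj (hAmeas k)]
    have hfin : ∀ s : Set Ω, μ s ≠ ⊤ := fun s => measure_ne_top μ s
    have htr : (μ (A k)).toReal
        = (μ {ω | X ω ≤ t k}).toReal - (μ {ω | X ω ≤ t (k+1)}).toReal := by
      rw [hmeq, ENNReal.toReal_add (hfin _) (hfin _)]
      ring
    have hlb : g 0 / 8 * t k ≤ (μ (A k)).toReal := by
      rw [htr]
      have h1 := hlow (t k) (htmem k)
      have h2 := hup (t (k+1)) (htmem (k+1))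
      have h4 : 5/4 * g 0 * t (k+1) = 5/8 * g 0 * t k := by rw [htsucc k]; ring
      linarith
    calc ENNReal.ofReal (g 0 / 8 * t k) ≤ ENNReal.ofReal (μ (A k)).toReal :=
          ENNReal.ofReal_le_ofReal hlb
    _ = μ (A k) := ENNReal.ofReal_toReal (measure_ne_top μ _)
  have hdisjAll : Pairwise (Function.onFun Disjoint A) := by
    have key : ∀ k l, k < l → Disjoint (A k) (A l) := by
      intro k l hkl
      rw [Set.disjoint_left]
      intro ω h1 h2
      have : X ω ≤ t l := h2.2
      have h3 : t l ≤ t (k + 1) := htanti hkl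
      exact absurd h1.1 (not_lt.mpr (le_trans this h3))
    intro k l hkl
    rcases lt_or_gt_of_ne hkl with h|h
    · exact key k l h
    · exact (key l k h).symm
  set f : Ω → ℝ≥0∞ := fun ω => (ENNReal.ofReal (X ω))⁻¹ with hf_def
  have hfmeas : Measurable f := (ENNReal.measurable_ofReal.comp hX).inv
  have hsection : ∀ k, ENNReal.ofReal (g 0 / 8) ≤ ∫⁻ ω in A k, f ω ∂μ := by
    intro k
    have hofk0 : ENNReal.ofReal (t k) ≠ 0 := by
      simp [ENNReal.ofReal_eq_zero, not_le, htpos k]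
    have hofktop : ENNReal.ofReal (t k) ≠ ⊤ := ENNReal.ofReal_ne_top
    calc ENNReal.ofReal (g 0 / 8)
        = (ENNReal.ofReal (t k))⁻¹ * ENNReal.ofReal (g 0 / 8 * t k) := by
          rw [ENNReal.ofReal_mul (by positivity), mul_comm (ENNReal.ofReal (g 0 / 8)),
            ← mul_assoc, ENNReal.inv_mul_cancel hofk0 hofktop, one_mul]
    _ ≤ (ENNReal.ofReal (t k))⁻¹ * μ (A k) := mul_le_mul_right (hμA k) _
    _ = ∫⁻ _ in A k, (ENNReal.ofReal (t k))⁻¹ ∂μ := (setLIntegral_const _ _).symm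
    _ ≤ ∫⁻ ω in A k, f ω ∂μ := by
          apply setLIntegral_mono hfmeas
          intro ω hω
          exact ENNReal.inv_le_inv.mpr (ENNReal.ofReal_le_ofReal hω.2)
  rw [eq_top_iff]
  calc (⊤ : ℝ≥0∞) = ∑' _ : ℕ, ENNReal.ofReal (g 0 / 8) := by
        rw [ENNReal.tsum_const_eq_top_of_ne_zero]
        simp [ENNReal.ofReal_eq_zero, not_le]
        positivity
  _ ≤ ∑' k, ∫⁻ ω in A k, f ω ∂μ := ENNReal.tsum_le_tsum hsection
  _ = ∫⁻ ω in ⋃ k, A k, f ω ∂μ := (lintegral_iUnion hAmeas hdisjAll f).symm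
  _ ≤ ∫⁻ ω, f ω ∂μ := setLIntegral_le_lintegral _ _

end Aux

/-- For i.i.d. complex coefficients with `ℙ(a₀ = 0) = 0`, `|a₀|` not a.s.
constant, and `|a₀|` having a density `g` on `[0,∞)` (`ℙ(|a₀| ≤ t) = ∫₀ᵗ g`) which is
continuous at `0` with `g 0 > 0`, the largest root modulus of `P_n` has infinite mean for
every `n ≥ 1`. -/
theorem maxRootMod_infinite_mean_of_density_pos_at_zero
    {Ω : Type*} [MeasurableSpace Ω] (μ : Measure Ω) [IsProbabilityMeasure μ]
    (a : ℕ → Ω → ℂ) (hmeas : ∀ k, Measurable (a k))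
    (hindep : iIndepFun a μ)
    (hid : ∀ k, IdentDistrib (a k) (a 0) μ μ)
    (hnc : ¬ ∃ c : ℝ, 0 ≤ c ∧ μ {ω | ‖a 0 ω‖ = c} = 1)
    (h0 : μ {ω | a 0 ω = 0} = 0)
    (g : ℝ → ℝ) (hgmeas : Measurable g) (hgnonneg : ∀ t, 0 ≤ g t)
    (hdens : ∀ t : ℝ, 0 ≤ t →
      (μ {ω | ‖a 0 ω‖ ≤ t}).toReal = ∫ s in (0 : ℝ)..t, g s)
    (hgcont : ContinuousAt g 0) (hgpos : 0 < g 0) :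
    ∀ n : ℕ, 1 ≤ n →
      ∫⁻ ω, ENNReal.ofReal (maxRootMod (kacPoly a n ω)) ∂μ = ⊤ := by
  intro n hn
  -- each coefficient is a.s. nonzero
  have hzero : ∀ k, μ {ω | a k ω = 0} = 0 := by
    intro k
    have h1 : {ω | a k ω = 0} = a k ⁻¹' {0} := rfl
    have h2 : {ω | a 0 ω = 0} = a 0 ⁻¹' {0} := rfl
    rw [h1, ← Measure.map_apply (hmeas k) (measurableSet_singleton 0), (hid k).map_eq,
      Measure.map_apply (hmeas 0) (measurableSet_singleton 0), ← h2, h0]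
  -- the two ENNReal-valued factors
  set φ1 : ℂ → ℝ≥0∞ := fun z => ENNReal.ofReal (‖z‖) with hφ1
  set φ2 : ℂ → ℝ≥0∞ := fun z => (ENNReal.ofReal ((n : ℝ) * ‖z‖))⁻¹ with hφ2
  have hφ1m : Measurable φ1 := continuous_norm.measurable.ennreal_ofReal
  have hφ2m : Measurable φ2 :=
    (continuous_norm.measurable.const_mul _).ennreal_ofReal.inv
  set F1 : Ω → ℝ≥0∞ := fun ω => φ1 (a (n-1) ω) with hF1
  set F2 : Ω → ℝ≥0∞ := fun ω => φ2 (a n ω) with hF2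
  have hF1m : Measurable F1 := hφ1m.comp (hmeas (n-1))
  have hF2m : Measurable F2 := hφ2m.comp (hmeas n)
  -- a.e. pointwise lower bound
  have hae : ∀ᵐ ω ∂μ, F1 ω * F2 ω ≤ ENNReal.ofReal (maxRootMod (kacPoly a n ω)) := by
    have hne : ∀ᵐ ω ∂μ, a n ω ≠ 0 := by
      rw [ae_iff]
      simpa using hzero n
    filter_upwards [hne] with ω hω
    set p := kacPoly a n ω with hp
    have hdeg : p.natDegree = n := KacAux.kacPoly_natDegree a n ω hω
    have hcn : p.coeff n = a n ω := KacAux.kacPoly_coeff a n ω le_rfl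
    have hcn1 : p.coeff (n-1) = a (n-1) ω := KacAux.kacPoly_coeff a n ω (by omega)
    have hbound := KacAux.poly_coeff_bound p n hn hdeg
    have hM0 : 0 ≤ maxRootMod p := KacAux.maxRootMod_nonneg p (KacAux.roots_ne_zero (by omega))
    have hypos : 0 < (n : ℝ) * ‖p.coeff n‖ := by
      apply mul_pos (by exact_mod_cast hn) (norm_pos_iff.mpr (by rw [hcn]; exact hω))
    have hdivle : ‖p.coeff (n-1)‖ / ((n : ℝ) * ‖p.coeff n‖) ≤ maxRootMod p :=
      (div_le_iff₀ hypos).mpr (by linarith [hbound])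
    calc F1 ω * F2 ω
        = ENNReal.ofReal ‖p.coeff (n-1)‖ / ENNReal.ofReal ((n : ℝ) * ‖p.coeff n‖) := by
          rw [hF1, hF2, hφ1, hφ2, div_eq_mul_inv, hcn, hcn1]
    _ = ENNReal.ofReal (‖p.coeff (n-1)‖ / ((n : ℝ) * ‖p.coeff n‖)) :=
          (ENNReal.ofReal_div_of_pos hypos).symm
    _ ≤ ENNReal.ofReal (maxRootMod p) := ENNReal.ofReal_le_ofReal hdivle
  -- independence factorization
  have hindep12 : IndepFun F1 F2 μ :=
    (hindep.indepFun (show (n-1 : ℕ) ≠ n by omega)).comp hφ1m hφ2m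
  have hfact : ∫⁻ ω, F1 ω * F2 ω ∂μ = (∫⁻ ω, F1 ω ∂μ) * ∫⁻ ω, F2 ω ∂μ :=
    lintegral_mul_eq_lintegral_mul_lintegral_of_indepFun hF1m hF2m hindep12
  -- first factor is positive
  have hF1pos : 0 < ∫⁻ ω, F1 ω ∂μ := by
    rw [lintegral_pos_iff_support hF1m]
    have hsub : {ω | a (n-1) ω = 0}ᶜ ⊆ Function.support F1 := by
      intro ω hω
      simp only [Set.mem_compl_iff, Set.mem_setOf_eq] at hω
      simp only [Function.mem_support, hF1, hφ1, ne_eq, ENNReal.ofReal_eq_zero, not_le]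
      exact norm_pos_iff.mpr hω
    calc (0 : ℝ≥0∞) < 1 := zero_lt_one
    _ = μ {ω | a (n-1) ω = 0}ᶜ := by
        rw [measure_compl (by exact (hmeas (n-1)) (measurableSet_singleton 0)) (measure_ne_top μ _),
          hzero (n-1), measure_univ, tsub_zero]
    _ ≤ μ (Function.support F1) := measure_mono hsub
  -- second factor is infinite
  have hF2top : ∫⁻ ω, F2 ω ∂μ = ⊤ := by
    have htrans : ∫⁻ ω, F2 ω ∂μ = ∫⁻ ω, φ2 (a 0 ω) ∂μ := by
      rw [hF2]
      rw [← lintegral_map hφ2m (hmeas n), (hid n).map_eq, lintegral_map hφ2m (hmeas 0)]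
    rw [htrans]
    have hX : Measurable (fun ω => ‖a 0 ω‖) :=
      continuous_norm.measurable.comp (hmeas 0)
    have hcore := KacAux.inv_lintegral_eq_top μ (fun ω => ‖a 0 ω‖) hX g hgmeas
      hgnonneg hdens hgcont hgpos
    have heq : ∀ ω, φ2 (a 0 ω)
        = ((n : ℝ≥0∞))⁻¹ * (ENNReal.ofReal (‖a 0 ω‖))⁻¹ := by
      intro ω
      rw [hφ2]
      simp only
      rw [ENNReal.ofReal_mul (by positivity), ENNReal.ofReal_natCast,
        ENNReal.mul_inv (Or.inl (by exact_mod_cast (by omega : n ≠ 0))) (Or.inl (ENNReal.natCast_ne_top n))]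
    simp_rw [heq]
    rw [lintegral_const_mul (f := fun ω => (ENNReal.ofReal ‖a 0 ω‖)⁻¹) _ hX.ennreal_ofReal.inv, hcore,
      ENNReal.mul_top (by
        simp only [ne_eq, ENNReal.inv_eq_zero]
        exact ENNReal.natCast_ne_top n)]
  -- conclusion
  rw [eq_top_iff]
  calc (⊤ : ℝ≥0∞) = (∫⁻ ω, F1 ω ∂μ) * ∫⁻ ω, F2 ω ∂μ := by
        rw [hF2top, ENNReal.mul_top (ne_of_gt hF1pos)]
  _ = ∫⁻ ω, F1 ω * F2 ω ∂μ := hfact.symm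
  _ ≤ ∫⁻ ω, ENNReal.ofReal (maxRootMod (kacPoly a n ω)) ∂μ := lintegral_mono_ae hae
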